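/- The map Q ↦ (Tr(Q^{−1}))^{−1} is concave on the cone of symmetric positive definite n×n real matrices; i.e., for all symmetric positive definite Q₀, Q₁ and all t ∈ [0,1], (Tr(((1−t)Q₀ + tQ₁)^{−1}))^{−1} ≥ (1−t)(Tr(Q₀^{−1}))^{−1} + t(Tr(Q₁^{−1}))^{−1}. -/

import Mathlib

open Matrix Set

private lemma posSemidef_smul' {n : ℕ} {A : Matrix (Fin n) (Fin n) ℝ} (hA : A.PosSemidef)
    {c : ℝ} (hc : 0 ≤ c) : (c • A).PosSemidef := by
  refine .of_dotProduct_mulVec_nonneg ?_ fun x => ?_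
  · unfold Matrix.IsHermitian
    rw [conjTranspose_smul, hA.1]
    simp
  · rw [smul_mulVec, dotProduct_smul, smul_eq_mul]
    exact mul_nonneg hc (hA.dotProduct_mulVec_nonneg x)

private lemma posDef_smul' {n : ℕ} {A : Matrix (Fin n) (Fin n) ℝ} (hA : A.PosDef)
    {c : ℝ} (hc : 0 < c) : (c • A).PosDef := by
  refine .of_dotProduct_mulVec_pos ?_ fun x hx => ?_
  · unfold Matrix.IsHermitian
    rw [conjTranspose_smul, hA.1]
    simp
  · rw [smul_mulVec, dotProduct_smul, smul_eq_mul]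
    exact mul_pos hc (hA.dotProduct_mulVec_pos hx)

private lemma diag_nonneg' {n : ℕ} {A : Matrix (Fin n) (Fin n) ℝ} (hA : A.PosSemidef)
    (i : Fin n) : 0 ≤ A i i := by
  have := hA.dotProduct_mulVec_nonneg (Pi.single i 1)
  simpa [dotProduct, mulVec, Pi.single_apply, Finset.sum_ite_eq, Finset.sum_ite_eq'] using this

private lemma trace_nonneg' {n : ℕ} {A : Matrix (Fin n) (Fin n) ℝ} (hA : A.PosSemidef) :
    0 ≤ A.trace :=
  Finset.sum_nonneg fun i _ => diag_nonneg' hA i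

private lemma trace_pos' {n : ℕ} (hn : 0 < n) {A : Matrix (Fin n) (Fin n) ℝ} (hA : A.PosDef) :
    0 < A.trace := by
  have hi : (⟨0, hn⟩ : Fin n) ∈ Finset.univ := Finset.mem_univ _
  have hd : ∀ i : Fin n, 0 < A i i := by
    intro i
    have hx : (Pi.single i 1 : Fin n → ℝ) ≠ 0 := by
      intro h
      have := congrFun h i
      simp at this
    have := hA.dotProduct_mulVec_pos hx
    simpa [dotProduct, mulVec, Pi.single_apply, Finset.sum_ite_eq, Finset.sum_ite_eq'] using this
  exact Finset.sum_pos (fun i _ => hd i) ⟨_, hi⟩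

/-- Cauchy–Schwarz: `(Tr M)² ≤ Tr(MQM) · Tr(Q⁻¹)` for `Q` PD and `M` Hermitian. -/
private lemma cs' {n : ℕ} {Q M : Matrix (Fin n) (Fin n) ℝ} (hQ : Q.PosDef)
    (hM : M.IsHermitian) (htr : 0 < Q⁻¹.trace) :
    (M.trace) ^ 2 ≤ (M * Q * M).trace * Q⁻¹.trace := by
  set r : ℝ := M.trace / Q⁻¹.trace with hr
  set N : Matrix (Fin n) (Fin n) ℝ := M - r • Q⁻¹ with hN
  have hNh : Nᴴ = N := by
    rw [hN, conjTranspose_sub, conjTranspose_smul, hM, hQ.isHermitian.inv]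
    simp
  have h0 : 0 ≤ (Nᴴ * Q * N).trace :=
    trace_nonneg' (hQ.posSemidef.conjTranspose_mul_mul_same N)
  rw [hNh] at h0
  have hdet : IsUnit Q.det := hQ.det_pos.ne'.isUnit
  have hQi : Q * Q⁻¹ = 1 := Matrix.mul_nonsing_inv Q hdet
  have hiQ : Q⁻¹ * Q = 1 := Matrix.nonsing_inv_mul Q hdet
  have hexp : (N * Q * N).trace
      = (M * Q * M).trace - 2 * r * M.trace + r ^ 2 * Q⁻¹.trace := by
    have e1 : N * Q * N = M * Q * M - r • M - r • M + (r ^ 2) • Q⁻¹ := by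
      rw [hN]
      have : (M - r • Q⁻¹) * Q = M * Q - r • (1 : Matrix (Fin n) (Fin n) ℝ) := by
        rw [sub_mul, smul_mul_assoc, hiQ]
      rw [this]
      rw [sub_mul, mul_sub, mul_sub, smul_mul_assoc, smul_mul_assoc, one_mul,
        mul_smul_comm, mul_smul_comm, mul_assoc M Q Q⁻¹, hQi, mul_one, one_mul,
        smul_smul, ← sq]
      abel
    rw [e1]
    simp only [trace_add, trace_sub, trace_smul, smul_eq_mul]
    ring
  rw [hexp] at h0
  have hr2 : r * Q⁻¹.trace = M.trace := by
    rw [hr, div_mul_cancel₀ _ htr.ne']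
  nlinarith [h0, sq_nonneg r, htr]

/-- **Concavity of `Q ↦ (Tr(Q⁻¹))⁻¹` (Appendix of Alvarez–Lasry–Lions).**
For all symmetric positive definite `n×n` real matrices `Q₀, Q₁` and all `t ∈ [0,1]`,
`(Tr(((1-t)Q₀ + tQ₁)⁻¹))⁻¹ ≥ (1-t)(Tr(Q₀⁻¹))⁻¹ + t(Tr(Q₁⁻¹))⁻¹`. -/
theorem inv_trace_inv_concave {n : ℕ}
    (Q₀ Q₁ : Matrix (Fin n) (Fin n) ℝ) (h₀ : Q₀.PosDef) (h₁ : Q₁.PosDef)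
    (t : ℝ) (ht : t ∈ Set.Icc (0 : ℝ) 1) :
    (1 - t) * (Matrix.trace Q₀⁻¹)⁻¹ + t * (Matrix.trace Q₁⁻¹)⁻¹ ≤
      (Matrix.trace ((1 - t) • Q₀ + t • Q₁)⁻¹)⁻¹ := by
  obtain ⟨ht0, ht1⟩ := ht
  rcases Nat.eq_zero_or_pos n with hn | hn
  · subst hn
    simp [Matrix.trace]
  set Qt : Matrix (Fin n) (Fin n) ℝ := (1 - t) • Q₀ + t • Q₁ with hQtdef
  have hQt : Qt.PosDef := by
    rcases eq_or_lt_of_le ht1 with h | h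
    · have : Qt = Q₁ := by rw [hQtdef, h]; simp
      rw [this]; exact h₁
    · exact (posDef_smul' h₀ (by linarith)).add_posSemidef
        (posSemidef_smul' h₁.posSemidef ht0)
  have hQtinv : Qt⁻¹.PosDef := hQt.inv
  have hc : 0 < Qt⁻¹.trace := trace_pos' hn hQtinv
  have ha : 0 < Q₀⁻¹.trace := trace_pos' hn h₀.inv
  have hb : 0 < Q₁⁻¹.trace := trace_pos' hn h₁.inv
  have hMh : Qt⁻¹.IsHermitian := hQt.isHermitian.inv
  have hcs0 : Qt⁻¹.trace ^ 2 ≤ (Qt⁻¹ * Q₀ * Qt⁻¹).trace * Q₀⁻¹.trace :=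
    cs' h₀ hMh ha
  have hcs1 : Qt⁻¹.trace ^ 2 ≤ (Qt⁻¹ * Q₁ * Qt⁻¹).trace * Q₁⁻¹.trace :=
    cs' h₁ hMh hb
  have hsum : (1 - t) * (Qt⁻¹ * Q₀ * Qt⁻¹).trace + t * (Qt⁻¹ * Q₁ * Qt⁻¹).trace
      = Qt⁻¹.trace := by
    have e : Qt⁻¹ * Qt * Qt⁻¹ = Qt⁻¹ := by
      rw [Matrix.nonsing_inv_mul Qt hQt.det_pos.ne'.isUnit, one_mul]
    calc (1 - t) * (Qt⁻¹ * Q₀ * Qt⁻¹).trace + t * (Qt⁻¹ * Q₁ * Qt⁻¹).trace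
        = (Qt⁻¹ * Qt * Qt⁻¹).trace := by
          rw [hQtdef]
          simp only [mul_add, add_mul, mul_smul_comm, smul_mul_assoc, trace_add, trace_smul,
            smul_eq_mul]
      _ = Qt⁻¹.trace := by rw [e]
  -- finish with arithmetic
  set c := Qt⁻¹.trace
  set a := Q₀⁻¹.trace
  set b := Q₁⁻¹.trace
  set s₀ := (Qt⁻¹ * Q₀ * Qt⁻¹).trace
  set s₁ := (Qt⁻¹ * Q₁ * Qt⁻¹).trace
  have h0 : a⁻¹ ≤ s₀ / c ^ 2 := by
    rw [inv_eq_one_div, div_le_div_iff₀ ha (by positivity)]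
    linarith [hcs0]
  have h1 : b⁻¹ ≤ s₁ / c ^ 2 := by
    rw [inv_eq_one_div, div_le_div_iff₀ hb (by positivity)]
    linarith [hcs1]
  have : (1 - t) * a⁻¹ + t * b⁻¹ ≤ ((1 - t) * s₀ + t * s₁) / c ^ 2 := by
    rw [add_div, mul_div_assoc, mul_div_assoc]
    exact add_le_add (mul_le_mul_of_nonneg_left h0 (by linarith))
      (mul_le_mul_of_nonneg_left h1 ht0)
  calc (1 - t) * a⁻¹ + t * b⁻¹ ≤ ((1 - t) * s₀ + t * s₁) / c ^ 2 := this
    _ = c / c ^ 2 := by rw [hsum]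
    _ = c⁻¹ := by field_simp
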